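/- Let n ≥ 1, m ≥ 4n−1, and let R ∈ ℂ^{n×n} be any reference with all entry magnitudes at most 1 and R(n−1,n−1) ≠ 0. Then the reference scaling factor satisfies S_R(k1,k2) ≥ 1/m⁴ for all k1, k2 ∈ {0,...,m−1}. -/

import Mathlib

open Complex MeasureTheory ProbabilityTheory Matrix ComplexConjugate
open scoped Kronecker

noncomputable section

/-- Zero-extension of a matrix to integer indices: out-of-range entries are `0`. -/
def zext {n1 n2 : ℕ} (X : Matrix (Fin n1) (Fin n2) ℂ) (t1 t2 : ℤ) : ℂ :=
  if h : 0 ≤ t1 ∧ t1 < (n1 : ℤ) ∧ 0 ≤ t2 ∧ t2 < (n2 : ℤ) then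
    X ⟨t1.toNat, by omega⟩ ⟨t2.toNat, by omega⟩
  else 0

/-- Cross-correlation `C_{[X1,X2]}(s1,s2)`, with out-of-range terms taken as `0`. -/
def crossCorr {n1 n2 : ℕ} (X1 X2 : Matrix (Fin n1) (Fin n2) ℂ) (s1 s2 : ℤ) : ℂ :=
  ∑ t1 : Fin n1, ∑ t2 : Fin n2,
    X1 t1 t2 * conj (zext X2 (((t1 : ℕ) : ℤ) - s1) (((t2 : ℕ) : ℤ) - s2))

/-- Autocorrelation `A_X = C_{[X,X]}`. -/
def autocorr {n1 n2 : ℕ} (X : Matrix (Fin n1) (Fin n2) ℂ) : ℤ → ℤ → ℂ :=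
  crossCorr X X

/-- Horizontal concatenation `[X, R]` of two `n × n` matrices. -/
def hcat {n : ℕ} (X R : Matrix (Fin n) (Fin n) ℂ) : Matrix (Fin n) (Fin (2 * n)) ℂ :=
  Matrix.of fun t1 t2 =>
    if h : (t2 : ℕ) < n then X t1 ⟨t2, h⟩ else R t1 ⟨(t2 : ℕ) - n, by omega⟩

/-- The size `m1 × m2` oversampled discrete Fourier transform of an `n1 × n2` signal. -/
def dft2 {n1 n2 : ℕ} (m1 m2 : ℕ) (Z : Matrix (Fin n1) (Fin n2) ℂ) (k1 k2 : ℕ) : ℂ :=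
  ∑ t1 : Fin n1, ∑ t2 : Fin n2,
    Z t1 t2 * Complex.exp (-(2 * (Real.pi : ℂ) * Complex.I) *
      (((t1 : ℕ) : ℂ) * (k1 : ℂ) / (m1 : ℂ) + ((t2 : ℕ) : ℂ) * (k2 : ℂ) / (m2 : ℂ)))

/-- Quadrant cross-correlation `C°_{[X,R]}(i,j) = C_{[X,R]}(i-(n-1), j-(n-1))`. -/
def quadCC {n : ℕ} (X R : Matrix (Fin n) (Fin n) ℂ) : Matrix (Fin n) (Fin n) ℂ :=
  Matrix.of fun i j =>
    crossCorr X R (((i : ℕ) : ℤ) - ((n : ℤ) - 1)) (((j : ℕ) : ℤ) - ((n : ℤ) - 1))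

/-- Columnwise vectorization: the pair `(j, i)` (column `j`, row `i`) indexes entry `X i j`. -/
def vecM {a b : ℕ} (X : Matrix (Fin a) (Fin b) ℂ) : Fin b × Fin a → ℂ :=
  fun p => X p.2 p.1

/-- The matrix `M_R` satisfying `vec (C°_{[X,R]}) = M_R • vec X` (columnwise vectorization). -/
def MR {n : ℕ} (R : Matrix (Fin n) (Fin n) ℂ) :
    Matrix (Fin n × Fin n) (Fin n × Fin n) ℂ :=
  Matrix.of fun p q =>
    conj (zext R (((q.2 : ℕ) : ℤ) - ((p.2 : ℕ) : ℤ) + ((n : ℤ) - 1))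
      (((q.1 : ℕ) : ℤ) - ((p.1 : ℕ) : ℤ) + ((n : ℤ) - 1)))

/-- `P1 · F_LA^*`: row `t ∈ {0,…,n-1}` corresponds to the column `t - (n-1)` of `F_LA`. -/
def P1FLA (n m : ℕ) : Matrix (Fin n) (Fin m) ℂ :=
  Matrix.of fun t k =>
    Complex.exp ((2 * (Real.pi : ℂ) * Complex.I) * ((k : ℕ) : ℂ) *
      (((t : ℕ) : ℂ) - ((n : ℂ) - 1)) / (m : ℂ))

/-- `P2 · F_RA^*`: row `t ∈ {0,…,n-1}` corresponds to the column `t - (2n-1)` of `F_RA`. -/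
def P2FRA (n m : ℕ) : Matrix (Fin n) (Fin m) ℂ :=
  Matrix.of fun t k =>
    Complex.exp ((2 * (Real.pi : ℂ) * Complex.I) * ((k : ℕ) : ℂ) *
      (((t : ℕ) : ℂ) - (2 * (n : ℂ) - 1)) / (m : ℂ))

/-- The referenced-deconvolution matrix
`T_R = (1/m²) · M_R⁻¹ · [(P2 F_RA^*) ⊗ (P1 F_LA^*)]`. -/
def TR {n : ℕ} (m : ℕ) (R : Matrix (Fin n) (Fin n) ℂ) :
    Matrix (Fin n × Fin n) (Fin m × Fin m) ℂ :=
  ((m : ℂ) ^ 2)⁻¹ • ((MR R)⁻¹ * (P2FRA n m ⊗ₖ P1FLA n m))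

/-- The reference scaling factor: `S_R(k1,k2)` is the squared ℓ²-norm of the column of `T_R`
indexed by the pair `(k1, k2)` (i.e. column `m·k1 + k2`). -/
def SR {n : ℕ} (m : ℕ) (R : Matrix (Fin n) (Fin n) ℂ) (k1 k2 : Fin m) : ℝ :=
  ∑ p : Fin n × Fin n, ‖TR m R p (k1, k2)‖ ^ 2

/-- Lower-triangular all-ones matrix `1_L`. -/
def oneL (n : ℕ) : Matrix (Fin n) (Fin n) ℂ :=
  Matrix.of fun i j => if j ≤ i then 1 else 0

/-- First-order difference matrix `D_n` (the inverse of `1_L`). -/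
def Dmat (n : ℕ) : Matrix (Fin n) (Fin n) ℂ :=
  Matrix.of fun i j => if i = j then 1 else if (j : ℕ) + 1 = (i : ℕ) then -1 else 0

/-- Pinhole reference. -/
def pinholeRef (n : ℕ) : Matrix (Fin n) (Fin n) ℂ :=
  Matrix.of fun t1 t2 => if (t1 : ℕ) = n - 1 ∧ (t2 : ℕ) = n - 1 then 1 else 0

/-- Slit reference. -/
def slitRef (n : ℕ) : Matrix (Fin n) (Fin n) ℂ :=
  Matrix.of fun _ t2 => if (t2 : ℕ) = n - 1 then 1 else 0

/-- Block reference. -/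
def blockRef (n : ℕ) : Matrix (Fin n) (Fin n) ℂ :=
  Matrix.of fun _ _ => 1

lemma zext_eq_zero' {n1 n2 : ℕ} (X : Matrix (Fin n1) (Fin n2) ℂ) (t1 t2 : ℤ)
    (h : ¬(0 ≤ t1 ∧ t1 < (n1 : ℤ) ∧ 0 ≤ t2 ∧ t2 < (n2 : ℤ))) : zext X t1 t2 = 0 :=
  dif_neg h

lemma zext_diag {n : ℕ} (hn : 1 ≤ n) (R : Matrix (Fin n) (Fin n) ℂ) :
    zext R ((n : ℤ) - 1) ((n : ℤ) - 1) = R ⟨n - 1, by omega⟩ ⟨n - 1, by omega⟩ := by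
  rw [zext, dif_pos (by omega)]
  congr 1 <;> exact Fin.ext (by simp)

lemma MR_apply_eq_zero {n : ℕ} (R : Matrix (Fin n) (Fin n) ℂ) (p q : Fin n × Fin n)
    (h : ¬((q.1 : ℕ) ≤ (p.1 : ℕ) ∧ (q.2 : ℕ) ≤ (p.2 : ℕ))) : MR R p q = 0 := by
  have hq1 := q.1.is_lt
  have hq2 := q.2.is_lt
  have hp1 := p.1.is_lt
  have hp2 := p.2.is_lt
  rw [MR, Matrix.of_apply, zext_eq_zero', map_zero]
  push_neg at h
  rcases le_or_gt (q.1 : ℕ) (p.1 : ℕ) with h1 | h1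
  · have h2 := h h1
    omega
  · omega

lemma MR_diag {n : ℕ} (hn : 1 ≤ n) (R : Matrix (Fin n) (Fin n) ℂ) (p : Fin n × Fin n) :
    MR R p p = conj (R ⟨n - 1, by omega⟩ ⟨n - 1, by omega⟩) := by
  simp only [MR, Matrix.of_apply, sub_self, zero_add]
  rw [zext_diag hn]

lemma MR_det_isUnit {n : ℕ} (hn : 1 ≤ n) (R : Matrix (Fin n) (Fin n) ℂ)
    (hR : R ⟨n - 1, by omega⟩ ⟨n - 1, by omega⟩ ≠ 0) : IsUnit (MR R).det := by
  set e : Fin n × Fin n ≃ Fin (n * n) := finProdFinEquiv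
  have key : ∀ p : Fin n × Fin n, ((p.2 : ℕ) + n * (p.1 : ℕ)) = ((e p : ℕ)) := by
    intro p; rfl
  have hdet : (MR R).det = (Matrix.reindex e e (MR R)).det :=
    (Matrix.det_reindex_self e (MR R)).symm
  rw [hdet, Matrix.det_of_lowerTriangular]
  · have hdg : ∀ i : Fin (n * n),
        Matrix.reindex e e (MR R) i i = conj (R ⟨n - 1, by omega⟩ ⟨n - 1, by omega⟩) := by
      intro i
      rw [Matrix.reindex_apply, Matrix.submatrix_apply, MR_diag hn]
    rw [Finset.prod_congr rfl fun i _ => hdg i, Finset.prod_const]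
    simp only [isUnit_iff_ne_zero]
    exact pow_ne_zero _ (by simpa using hR)
  · intro i j hij
    have hij' : (i : ℕ) < (j : ℕ) := hij
    rw [Matrix.reindex_apply, Matrix.submatrix_apply]
    apply MR_apply_eq_zero
    rintro ⟨h1, h2⟩
    have k1 := key (e.symm i)
    have k2 := key (e.symm j)
    rw [e.apply_symm_apply] at k1 k2
    have := Nat.mul_le_mul_left n h1
    omega

lemma abs_P1FLA (n m : ℕ) (t : Fin n) (k : Fin m) : ‖P1FLA n m t k‖ = 1 := by
  have h : (2 * (Real.pi : ℂ) * Complex.I) * ((k : ℕ) : ℂ) *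
      (((t : ℕ) : ℂ) - ((n : ℂ) - 1)) / (m : ℂ)
      = ((2 * Real.pi * ((k : ℕ) : ℝ) * (((t : ℕ) : ℝ) - ((n : ℝ) - 1)) / (m : ℝ) : ℝ) : ℂ)
        * Complex.I := by
    push_cast; ring
  rw [P1FLA, Matrix.of_apply, h, Complex.norm_exp_ofReal_mul_I]

lemma abs_P2FRA (n m : ℕ) (t : Fin n) (k : Fin m) : ‖P2FRA n m t k‖ = 1 := by
  have h : (2 * (Real.pi : ℂ) * Complex.I) * ((k : ℕ) : ℂ) *
      (((t : ℕ) : ℂ) - (2 * (n : ℂ) - 1)) / (m : ℂ)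
      = ((2 * Real.pi * ((k : ℕ) : ℝ) * (((t : ℕ) : ℝ) - (2 * (n : ℝ) - 1)) / (m : ℝ) : ℝ) : ℂ)
        * Complex.I := by
    push_cast; ring
  rw [P2FRA, Matrix.of_apply, h, Complex.norm_exp_ofReal_mul_I]

/-- Uniform lower bound on the reference scaling factor: for any reference with
entry magnitudes at most `1` and `R(n-1,n-1) ≠ 0`, `S_R(k1,k2) ≥ 1/m⁴`. -/
theorem scaling_factor_uniform_lower_bound
    (n m : ℕ) (hn : 1 ≤ n) (hm : 4 * n - 1 ≤ m)
    (R : Matrix (Fin n) (Fin n) ℂ)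
    (hmag : ∀ t1 t2 : Fin n, ‖R t1 t2‖ ≤ 1)
    (hR : R ⟨n - 1, by omega⟩ ⟨n - 1, by omega⟩ ≠ 0)
    (k1 k2 : Fin m) :
    1 / (m : ℝ) ^ 4 ≤ SR m R k1 k2 := by
  classical
  have hm3 : 3 ≤ m := by omega
  have hmpos : (0 : ℝ) < (m : ℝ) := by positivity
  set d : ℂ := R ⟨n - 1, by omega⟩ ⟨n - 1, by omega⟩ with hd
  set z0 : Fin n := ⟨0, by omega⟩ with hz0
  set p0 : Fin n × Fin n := (z0, z0) with hp0
  set W : Matrix (Fin n × Fin n) (Fin m × Fin m) ℂ :=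
    (MR R)⁻¹ * (P2FRA n m ⊗ₖ P1FLA n m) with hW
  have hdet := MR_det_isUnit hn R hR
  have hMW : MR R * W = P2FRA n m ⊗ₖ P1FLA n m := by
    rw [hW, ← Matrix.mul_assoc, Matrix.mul_nonsing_inv _ hdet, Matrix.one_mul]
  -- row p0 of the equation
  have hrow : conj d * W p0 (k1, k2) = P2FRA n m z0 k1 * P1FLA n m z0 k2 := by
    have h0 := congrFun (congrFun hMW p0) (k1, k2)
    rw [Matrix.mul_apply, Finset.sum_eq_single p0] at h0
    · rw [MR_diag hn R p0] at h0
      rw [← hd] at h0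
      rw [h0, Matrix.kroneckerMap_apply]
    · intro q _ hq
      rw [MR_apply_eq_zero R p0 q, zero_mul]
      rintro ⟨h1, h2⟩
      exact hq (Prod.ext (Fin.ext (by simp only [hp0, hz0] at h1 ⊢; omega)) (Fin.ext (by simp only [hp0, hz0] at h2 ⊢; omega)))
    · intro h; exact absurd (Finset.mem_univ p0) h
  -- modulus bookkeeping
  have habs : ‖d‖ * ‖W p0 (k1, k2)‖ = 1 := by
    have := congrArg (‖·‖) hrow
    rwa [norm_mul, norm_mul, Complex.norm_conj, abs_P2FRA, abs_P1FLA, mul_one] at this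
  have hdle : ‖d‖ ≤ 1 := hmag _ _
  have hWge : 1 ≤ ‖W p0 (k1, k2)‖ := by
    nlinarith [norm_nonneg (W p0 (k1, k2)), norm_nonneg d]
  -- conclude
  have hterm : 1 / (m : ℝ) ^ 4 ≤ ‖TR m R p0 (k1, k2)‖ ^ 2 := by
    have hTR : TR m R p0 (k1, k2) = ((m : ℂ) ^ 2)⁻¹ * W p0 (k1, k2) := by
      rw [TR, Matrix.smul_apply, smul_eq_mul, hW]
    rw [hTR]
    rw [norm_mul, norm_inv, norm_pow,
      Complex.norm_natCast]
    rw [mul_pow]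
    have h1 : ((m : ℝ)^2)⁻¹ ^ 2 = 1 / (m : ℝ) ^ 4 := by
      field_simp
    nlinarith [norm_nonneg (W p0 (k1, k2)), pow_pos hmpos 4,
      sq_nonneg (‖W p0 (k1, k2)‖ - 1)]
  calc 1 / (m : ℝ) ^ 4 ≤ ‖TR m R p0 (k1, k2)‖ ^ 2 := hterm
    _ ≤ SR m R k1 k2 := by
      apply Finset.single_le_sum (f := fun p => ‖TR m R p (k1, k2)‖ ^ 2)
      · intro i _; positivity
      · exact Finset.mem_univ p0
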